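/- arXiv:2107.05435 — 6 statements merged into one kernel-verified Lean document; each statement's English description precedes it below -/
import Mathlib

section
/- If a pair of monomials (u,v) of the same degree is sorted (i.e. sort(u,v) = (u,v)), then u ≥ v in the lexicographic order on monomials. -/
/-- Split a list into (odd-position entries, even-position entries), positions counted from 1. -/
def altSplit {α : Type*} : List α → List α × List α
  | [] => ([], [])
  | a :: l => (a :: (altSplit l).2, (altSplit l).1)

/-- The weakly increasing list of indices of a monomial (viewed as a multiset of variable indices). -/
def mSort (m : Multiset ℕ) : List ℕ := m.sort (· ≤ ·)

/-- The sorting operator: merge the indices of `u` and `v` in weakly increasing order and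
give the odd positions to the first component, the even positions to the second. -/
def sortPair (u v : Multiset ℕ) : Multiset ℕ × Multiset ℕ :=
  (↑(altSplit (mSort (u + v))).1, ↑(altSplit (mSort (u + v))).2)

/-- A pair of monomials is sorted if the sorting operator fixes it (up to swapping). -/
def SortedPair (u v : Multiset ℕ) : Prop :=
  sortPair u v = (u, v) ∨ sortPair u v = (v, u)

/-- A monomial is `t`-spread if consecutive indices (in weakly increasing order) differ by ≥ t. -/
def TSpread (t : ℕ) (m : Multiset ℕ) : Prop :=
  (mSort m).Chain' (fun a b => a + t ≤ b)

/-- `v` is componentwise dominated by `u`. -/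
def Dominates (v u : Multiset ℕ) : Prop :=
  List.Forall₂ (· ≤ ·) (mSort v) (mSort u)

/-- The minimal generators of the t-spread principal Borel ideal `B_t(u)`:
t-spread monomials of the same degree componentwise dominated by `u`. -/
def BtGens (t : ℕ) (u : Multiset ℕ) : Set (Multiset ℕ) :=
  {v | Multiset.card v = Multiset.card u ∧ TSpread t v ∧ Dominates v u}

/-- The sorted graph of `B_t(u)`: vertices the minimal generators, edges the sorted pairs. -/
def sortedGraph (t : ℕ) (u : Multiset ℕ) : SimpleGraph ↥(BtGens t u) :=
  SimpleGraph.fromRel (fun v w => SortedPair v.1 w.1)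

/-- The graph has an induced cycle of length `n ≥ 4`. -/
def HasInducedCycle {V : Type*} (G : SimpleGraph V) : Prop :=
  ∃ n : ℕ, 4 ≤ n ∧ ∃ f : ZMod n → V, Function.Injective f ∧
    ∀ i j : ZMod n, G.Adj (f i) (f j) ↔ (j = i + 1 ∨ i = j + 1)

theorem altSplit_mem {α : Type*} : ∀ (L : List α),
    (∀ x ∈ (altSplit L).1, x ∈ L) ∧ (∀ x ∈ (altSplit L).2, x ∈ L)
  | [] => by simp [altSplit]
  | a :: l => by
    have ih := altSplit_mem l
    simp only [altSplit, List.mem_cons]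
    constructor
    · rintro x (rfl | hx)
      · exact Or.inl rfl
      · exact Or.inr (ih.2 x hx)
    · intro x hx; exact Or.inr (ih.1 x hx)

theorem altSplit_spec : ∀ (L : List ℕ), L.Pairwise (· ≤ ·) →
    (altSplit L).1.Pairwise (· ≤ ·) ∧ (altSplit L).2.Pairwise (· ≤ ·) ∧
      ((altSplit L).1.length = (altSplit L).2.length →
        List.Forall₂ (· ≤ ·) (altSplit L).1 (altSplit L).2)
  | [], _ => by simp [altSplit]
  | [a], _ => by simp [altSplit]
  | a :: b :: l, h => by
    have hl : l.Pairwise (· ≤ ·) := (List.pairwise_cons.mp (List.pairwise_cons.mp h).2).2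
    have hab : a ≤ b := (List.pairwise_cons.mp h).1 b (by simp)
    have hal : ∀ x ∈ l, a ≤ x := fun x hx => (List.pairwise_cons.mp h).1 x (by simp [hx])
    have hbl : ∀ x ∈ l, b ≤ x := fun x hx =>
      (List.pairwise_cons.mp (List.pairwise_cons.mp h).2).1 x hx
    have ih := altSplit_spec l hl
    have hmem := altSplit_mem l
    show (a :: (altSplit l).1).Pairwise (· ≤ ·) ∧ (b :: (altSplit l).2).Pairwise (· ≤ ·) ∧ _
    refine ⟨List.pairwise_cons.mpr ⟨fun x hx => hal x (hmem.1 x hx), ih.1⟩,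
      List.pairwise_cons.mpr ⟨fun x hx => hbl x (hmem.2 x hx), ih.2.1⟩, ?_⟩
    intro hlen
    simp only [altSplit, List.length_cons, Nat.add_right_cancel_iff] at hlen
    exact List.Forall₂.cons hab (ih.2.2 hlen)

theorem forall₂_le_lex : ∀ {A B : List ℕ}, List.Forall₂ (· ≤ ·) A B →
    A = B ∨ List.Lex (· < ·) A B := by
  intro A B h
  induction h with
  | nil => exact Or.inl rfl
  | cons hab _ ih =>
    rcases lt_or_eq_of_le hab with hlt | heq
    · exact Or.inr (List.Lex.rel hlt)
    · subst heq
      rcases ih with rfl | hl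
      · exact Or.inl rfl
      · exact Or.inr (List.Lex.cons hl)

theorem mSort_coe_of_sorted {A : List ℕ} (hA : A.Pairwise (· ≤ ·)) : mSort ↑A = A := by
  refine List.Perm.eq_of_pairwise' (Multiset.pairwise_sort ..) hA ?_
  exact Multiset.coe_eq_coe.mp (Multiset.sort_eq _ _)

/-- if sort(u,v) = (u,v) then u ≥ v in lexicographic order
(at the first position where the sorted index sequences differ, u has the smaller index). -/
theorem sorted_pair_lex (d : ℕ) (u v : Multiset ℕ)
    (hu : Multiset.card u = d) (hv : Multiset.card v = d)
    (h : sortPair u v = (u, v)) :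
    mSort u = mSort v ∨ List.Lex (· < ·) (mSort u) (mSort v) := by
  set L := mSort (u + v) with hL
  have hLs : L.Pairwise (· ≤ ·) := Multiset.pairwise_sort ..
  have hu' : (↑(altSplit L).1 : Multiset ℕ) = u := congrArg Prod.fst h
  have hv' : (↑(altSplit L).2 : Multiset ℕ) = v := congrArg Prod.snd h
  have spec := altSplit_spec L hLs
  have hlen : (altSplit L).1.length = (altSplit L).2.length := by
    have h1 : ((altSplit L).1.length : ℕ) = d := by
      rw [← hu]; rw [← hu']; simp
    have h2 : ((altSplit L).2.length : ℕ) = d := by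
      rw [← hv]; rw [← hv']; simp
    omega
  have hmu : mSort u = (altSplit L).1 := by rw [← hu']; exact mSort_coe_of_sorted spec.1
  have hmv : mSort v = (altSplit L).2 := by rw [← hv']; exact mSort_coe_of_sorted spec.2.1
  rw [hmu, hmv]
  exact forall₂_le_lex (spec.2.2 hlen)
end

section
/- A pair of monomials (u,v) of degree d, with index sequences u = x_{a_1}···x_{a_d} and v = x_{b_1}···x_{b_d} (a_1 ≤ ... ≤ a_d, b_1 ≤ ... ≤ b_d), satisfies sort(u,v) = (u,v) if and only if a_1 ≤ b_1 ≤ a_2 ≤ b_2 ≤ ... ≤ a_d ≤ b_d. -/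
/-- Interleaving of two lists: `interleave [a₁,…] [b₁,…] = [a₁,b₁,a₂,b₂,…]`. -/
def interleave {α : Type*} : List α → List α → List α
  | [], l => l
  | a :: l, l' => a :: interleave l' l
termination_by l l' => l.length + l'.length


lemma interleave_altSplit {α : Type*} : ∀ l : List α,
    interleave (altSplit l).1 (altSplit l).2 = l
  | [] => by simp [altSplit, interleave]
  | a :: l => by
    rw [altSplit, interleave, interleave_altSplit l]

lemma altSplit_sublist {α : Type*} : ∀ l : List α,
    (altSplit l).1.Sublist l ∧ (altSplit l).2.Sublist l
  | [] => ⟨List.Sublist.refl _, List.Sublist.refl _⟩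
  | a :: l => by
    obtain ⟨h1, h2⟩ := altSplit_sublist l
    exact ⟨List.Sublist.cons₂ a h2, h1.cons a⟩

lemma interleave_coe {α : Type*} : ∀ a b : List α,
    (↑(interleave a b) : Multiset α) = ↑a + ↑b
  | [], b => by simp [interleave]
  | x :: a, b => by
    rw [interleave, ← Multiset.cons_coe, interleave_coe b a,
      add_comm (↑b : Multiset α) ↑a, ← Multiset.cons_add, Multiset.cons_coe]
termination_by a b => a.length + b.length

lemma altSplit_interleave {α : Type*} : ∀ a b : List α, b.length ≤ a.length →
    a.length ≤ b.length + 1 → altSplit (interleave a b) = (a, b)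
  | [], b, h1, _ => by
    have : b = [] := List.eq_nil_of_length_eq_zero (Nat.le_zero.mp (by simpa using h1))
    subst this; simp [interleave, altSplit]
  | x :: a, b, h1, h2 => by
    rw [interleave, altSplit,
      altSplit_interleave b a (by simpa using h2) (by simpa using h1)]
termination_by a b => a.length + b.length

/-- (u,v) satisfies sort(u,v) = (u,v) iff a₁ ≤ b₁ ≤ a₂ ≤ b₂ ≤ … ≤ a_d ≤ b_d. -/
theorem sorted_iff_interleaved (d : ℕ) (a b : List ℕ)
    (ha : a.length = d) (hb : b.length = d)
    (hsa : a.Chain' (· ≤ ·)) (hsb : b.Chain' (· ≤ ·)) :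
    sortPair ↑a ↑b = (↑a, ↑b) ↔ (interleave a b).Chain' (· ≤ ·) := by
  constructor
  · intro h
    have h1 : (↑(altSplit (mSort (↑a + ↑b))).1 : Multiset ℕ) = ↑a := congrArg Prod.fst h
    have h2 : (↑(altSplit (mSort (↑a + ↑b))).2 : Multiset ℕ) = ↑b := congrArg Prod.snd h
    set s := mSort (↑a + ↑b) with hs
    have hss : s.Chain' (· ≤ ·) := List.isChain_iff_pairwise.mpr (Multiset.pairwise_sort _ _)
    have hp := List.isChain_iff_pairwise.mp hss
    obtain ⟨hsub1, hsub2⟩ := altSplit_sublist s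
    have e1 : (altSplit s).1 = a :=
      List.Perm.eq_of_pairwise'
        (hp.sublist hsub1) (List.isChain_iff_pairwise.mp hsa) (Multiset.coe_eq_coe.mp h1)
    have e2 : (altSplit s).2 = b :=
      List.Perm.eq_of_pairwise'
        (hp.sublist hsub2) (List.isChain_iff_pairwise.mp hsb) (Multiset.coe_eq_coe.mp h2)
    have : interleave a b = s := by rw [← e1, ← e2, interleave_altSplit]
    rw [this]; exact hss
  · intro h
    have hcoe : (↑(interleave a b) : Multiset ℕ) = ↑a + ↑b := interleave_coe a b
    have hsorted : (interleave a b) = mSort (↑a + ↑b) := by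
      refine List.Perm.eq_of_pairwise' (List.isChain_iff_pairwise.mp h)
        (Multiset.pairwise_sort _ _) ?_
      exact Multiset.coe_eq_coe.mp (by rw [hcoe, mSort, Multiset.sort_eq])
    have := altSplit_interleave a b (by omega) (by omega)
    simp only [sortPair, ← hsorted, this]
end

section
/- Let t ≥ 1, d ≥ 3, u = (∏_{i=1}^{d−1} x_{(i−1)t+2})·x_{(d−1)t+3}. With w_1 = (∏_{j=1}^{a} x_{(j−1)t+1})(∏_{j=a+1}^{d} x_{(j−1)t+2}) and w_2 = (∏_{j=1}^{b} x_{(j−1)t+1})(∏_{j=b+1}^{d−1} x_{(j−1)t+2})·x_{(d−1)t+3}, the pair (w_1, w_2) is sorted if and only if a ≥ b. -/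
section Aux

lemma altSplit_flatMap {α β : Type*} (P Q : α → β) :
    ∀ l : List α, altSplit (l.flatMap fun j => [P j, Q j]) = (l.map P, l.map Q)
  | [] => rfl
  | a :: l => by
    rw [List.flatMap_cons]
    show altSplit (P a :: Q a :: (l.flatMap fun j => [P j, Q j])) = _
    rw [altSplit, altSplit, altSplit_flatMap P Q l]
    simp

lemma coe_flatMap_pair (P Q f g : ℕ → ℕ) :
    ∀ l : List ℕ, (∀ j ∈ l, ({P j, Q j} : Multiset ℕ) = {f j, g j}) →
      ((l.flatMap fun j => [P j, Q j] : List ℕ) : Multiset ℕ) = ↑(l.map f) + ↑(l.map g)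
  | [], _ => rfl
  | a :: l, h => by
    have h1 := h a List.mem_cons_self
    have ih := coe_flatMap_pair P Q f g l (fun j hj => h j (List.mem_cons_of_mem _ hj))
    rw [List.flatMap_cons, List.map_cons, List.map_cons, ← Multiset.coe_add]
    have e1 : (([P a, Q a] : List ℕ) : Multiset ℕ) = {P a, Q a} := rfl
    have e2 : ((f a :: l.map f : List ℕ) : Multiset ℕ) = {f a} + ↑(l.map f) := by
      simp [Multiset.singleton_add]
    have e3 : ((g a :: l.map g : List ℕ) : Multiset ℕ) = {g a} + ↑(l.map g) := by
      simp [Multiset.singleton_add]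
    rw [e1, e2, e3, ih, h1]
    have : ({f a, g a} : Multiset ℕ) = {f a} + {g a} := by
      simp [Multiset.singleton_add, Multiset.insert_eq_cons]
    rw [this]
    abel

lemma chain'_flatMap_pair (P Q : ℕ → ℕ) :
    ∀ l : List ℕ, List.Chain' (fun i j => Q i ≤ P j) l → (∀ i ∈ l, P i ≤ Q i) →
      List.Chain' (· ≤ ·) (l.flatMap fun j => [P j, Q j])
  | [], _, _ => List.isChain_nil
  | [a], _, h2 => by
    simp only [List.flatMap_cons, List.flatMap_nil, List.append_nil]
    exact List.isChain_pair.mpr (h2 a (List.mem_singleton_self a))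
  | a :: b :: l, h1, h2 => by
    have ih := chain'_flatMap_pair P Q (b :: l) h1.tail
      (fun i hi => h2 i (List.mem_cons_of_mem _ hi))
    have hQa : Q a ≤ P b := (List.isChain_cons_cons.mp h1).1
    have hPa : P a ≤ Q a := h2 a List.mem_cons_self
    simp only [List.flatMap_cons, List.cons_append] at ih ⊢
    exact List.isChain_cons_cons.mpr ⟨hPa, List.isChain_cons_cons.mpr ⟨hQa, ih⟩⟩

end Aux

/-- the pair (w₁, w₂), with w₁ in the A-family with parameter a and w₂
in the B-family with parameter b, is sorted if and only if a ≥ b. -/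
theorem sorted_A_B_iff (t d : ℕ) (ht : 1 ≤ t) (hd : 3 ≤ d) (a b : ℕ)
    (ha : a ≤ d - 1) (hb1 : 1 ≤ b) (hb2 : b ≤ d - 1) :
    SortedPair
      ↑((List.range d).map (fun j => if j < a then j * t + 1 else j * t + 2))
      (↑((List.range (d - 1)).map (fun j => if j < b then j * t + 1 else j * t + 2)) +
        {(d - 1) * t + 3}) ↔ b ≤ a := by
  obtain ⟨e, rfl⟩ : ∃ e, d = e + 3 := ⟨d - 3, by omega⟩
  have hd1 : e + 3 - 1 = e + 2 := rfl
  rw [hd1] at ha hb2 ⊢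
  set F : ℕ → ℕ := fun j => if j < a then j * t + 1 else j * t + 2 with hF
  set G : ℕ → ℕ := fun j => if j < b then j * t + 1 else j * t + 2 with hG
  set P : ℕ → ℕ := fun j => if j < max a b then j * t + 1 else j * t + 2 with hP
  set Q : ℕ → ℕ := fun j =>
    if j = e + 2 then (e + 2) * t + 3 else if j < min a b then j * t + 1 else j * t + 2 with hQ
  set U : Multiset ℕ := ↑((List.range (e + 3)).map F) with hU
  set V : Multiset ℕ := ↑((List.range (e + 2)).map G) + {(e + 2) * t + 3} with hV
  set L : List ℕ := (List.range (e + 3)).flatMap fun j => [P j, Q j] with hL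
  have hM2 : max a b ≤ e + 2 := max_le ha hb2
  have hN2 : min a b ≤ e + 2 := le_trans (min_le_left a b) ha
  -- multiset identity
  have hmid : ∀ j ∈ List.range (e + 2), ({P j, Q j} : Multiset ℕ) = {F j, G j} := by
    intro j hj
    rw [List.mem_range] at hj
    have hne : j ≠ e + 2 := by omega
    simp only [hP, hQ, hF, hG, if_neg hne]
    rcases lt_or_ge j (min a b) with h | h
    · rw [if_pos h, if_pos (by omega), if_pos (by omega), if_pos (by omega)]
    · rcases lt_or_ge j (max a b) with h' | h'
      · rw [if_pos h', if_neg (by omega)]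
        rcases le_or_gt a b with hab | hab
        · rw [if_neg (by omega), if_pos (by omega)]
          exact Multiset.pair_comm _ _
        · rw [if_pos (by omega), if_neg (by omega)]
      · rw [if_neg (by omega), if_neg (by omega), if_neg (by omega), if_neg (by omega)]
  have hsum : (↑L : Multiset ℕ) = U + V := by
    rw [hL, hU, hV]
    rw [show List.range (e + 3) = List.range (e + 2) ++ [e + 2] from
        by rw [show e + 3 = (e + 2) + 1 from rfl, List.range_succ],
      List.flatMap_append, List.map_append, ← Multiset.coe_add, ← Multiset.coe_add,
      coe_flatMap_pair P Q F G _ hmid]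
    have h1 : (([P (e + 2), Q (e + 2)] : List ℕ) : Multiset ℕ)
        = {(e + 2) * t + 2} + {(e + 2) * t + 3} := by
      simp only [List.flatMap_cons, List.flatMap_nil, List.append_nil, hP, hQ,
        if_neg (by omega : ¬ e + 2 < max a b), if_pos rfl]
      rfl
    have h2 : (([F (e + 2)] : List ℕ) : Multiset ℕ) = {(e + 2) * t + 2} := by
      simp only [hF, if_neg (by omega : ¬ e + 2 < a)]
      rfl
    simp only [List.flatMap_cons, List.flatMap_nil, List.append_nil,
      List.map_cons, List.map_nil] at h1 h2 ⊢
    rw [h1, h2]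
    abel
  -- sortedness of L
  have hchainPQ : List.Chain' (fun i j => Q i ≤ P j) (List.range (e + 3)) := by
    rw [show (e + 3 : ℕ) = (e + 2).succ from rfl]
    show List.IsChain _ (List.range (e + 2).succ)
    rw [List.isChain_range_succ]
    intro m hm
    show Q m ≤ P (m + 1)
    have hmt : m * t + t ≤ (m + 1) * t := by rw [Nat.succ_mul]
    have hQm : Q m ≤ m * t + 2 := by
      simp only [hQ, if_neg (by omega : m ≠ e + 2)]
      split_ifs <;> omega
    have hPm : m * t + t + 1 ≤ P (m + 1) := by
      simp only [hP]
      split_ifs <;> omega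
    omega
  have hPQ : ∀ i ∈ List.range (e + 3), P i ≤ Q i := by
    intro i hi
    rw [List.mem_range] at hi
    by_cases hie : i = e + 2
    · subst hie
      simp only [hP, hQ, if_pos rfl, if_neg (by omega : ¬ e + 2 < max a b)]
      omega
    · simp only [hP, hQ, if_neg hie]
      have hmm : min a b ≤ max a b := min_le_max
      split_ifs <;> omega
  have hLsorted : List.Pairwise (· ≤ ·) L :=
    List.isChain_iff_pairwise.mp (chain'_flatMap_pair P Q _ hchainPQ hPQ)
  -- mSort computation
  have hmsort : mSort (U + V) = L := by
    refine List.Perm.eq_of_pairwise' (Multiset.pairwise_sort _ _) hLsorted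
      (Multiset.coe_eq_coe.mp ?_)
    rw [hsum]
    exact Multiset.sort_eq _ _
  have hsp : sortPair U V
      = (↑((List.range (e + 3)).map P), ↑((List.range (e + 3)).map Q)) := by
    rw [sortPair, hmsort, hL, altSplit_flatMap]
  rw [SortedPair, hsp]
  constructor
  · rintro (h | h)
    · by_contra hab
      push_neg at hab
      have h1 : (↑((List.range (e + 3)).map P) : Multiset ℕ) = U := congrArg Prod.fst h
      have hmem : (a * t + 1 : ℕ) ∈ (↑((List.range (e + 3)).map P) : Multiset ℕ) := by
        rw [Multiset.mem_coe, List.mem_map]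
        exact ⟨a, List.mem_range.mpr (by omega), by
          simp only [hP, if_pos (lt_of_lt_of_le hab (le_max_right a b))]⟩
      rw [h1, hU, Multiset.mem_coe, List.mem_map] at hmem
      obtain ⟨j, hj, hval⟩ := hmem
      rw [List.mem_range] at hj
      simp only [hF] at hval
      split_ifs at hval with hja
      · have : j * t < a * t := Nat.mul_lt_mul_of_lt_of_le hja (le_refl t) ht
        omega
      · have : a * t ≤ j * t := Nat.mul_le_mul_right t (by omega)
        omega
    · exfalso
      have h1 : (↑((List.range (e + 3)).map P) : Multiset ℕ) = V := congrArg Prod.fst h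
      have hmem : ((e + 2) * t + 3 : ℕ) ∈ V := by
        rw [hV]
        exact Multiset.mem_add.mpr (Or.inr (Multiset.mem_singleton_self _))
      rw [← h1, Multiset.mem_coe, List.mem_map] at hmem
      obtain ⟨j, hj, hval⟩ := hmem
      rw [List.mem_range] at hj
      have : j * t ≤ (e + 2) * t := Nat.mul_le_mul_right t (by omega)
      simp only [hP] at hval
      split_ifs at hval <;> omega
  · intro hba
    left
    have hMa : max a b = a := max_eq_left hba
    have hNb : min a b = b := min_eq_right hba
    have hfst : (List.range (e + 3)).map P = (List.range (e + 3)).map F := by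
      refine List.map_congr_left fun j _ => ?_
      simp only [hP, hF, hMa]
    have hsnd : (↑((List.range (e + 3)).map Q) : Multiset ℕ) = V := by
      rw [show List.range (e + 3) = List.range (e + 2) ++ [e + 2] from
          by rw [show e + 3 = (e + 2) + 1 from rfl, List.range_succ],
        List.map_append, ← Multiset.coe_add, hV]
      have hQG : (List.range (e + 2)).map Q = (List.range (e + 2)).map G := by
        refine List.map_congr_left fun j hj => ?_
        rw [List.mem_range] at hj
        simp only [hQ, hG, if_neg (by omega : j ≠ e + 2), hNb]
      have hQlast : ([e + 2].map Q : List ℕ) = [(e + 2) * t + 3] := by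
        simp only [List.map_cons, List.map_nil, hQ]
        simp
      rw [hQG, hQlast]
      rfl
    rw [hfst, hsnd, hU]
end

section
/- Let t ≥ 1, d ≥ 3, and u = x_{i_1}···x_{i_d} a t-spread monomial with i_1 ≥ 3. Set v = ∏_{j=4}^{d} x_{(j−1)t+3} (v = 1 if d = 3). Then the four monomials x_1x_{t+1}x_{2t+3}v, x_2x_{t+2}x_{2t+3}v, x_1x_{t+2}x_{2t+2}v, x_1x_{t+3}x_{2t+3}v are all minimal generators of B_t(u), and they form an induced 4-cycle in the sorted graph of B_t(u). -/
/- ### auxiliary machinery -/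

def List.Sorted {α : Type*} (r : α → α → Prop) (l : List α) : Prop := l.Pairwise r

def dbl {α : Type*} : List α → List α
  | [] => []
  | a :: l => a :: a :: dbl l

lemma mSort_coe (l : List ℕ) (h : l.Sorted (· ≤ ·)) : mSort (↑l) = l := by
  apply List.Perm.eq_of_pairwise' (Multiset.pairwise_sort _ _) h
  exact Multiset.coe_eq_coe.mp (by rw [Multiset.sort_eq])

lemma altSplit_cons₂ {α : Type*} (a b : α) (l : List α) :
    altSplit (a :: b :: l) = (a :: (altSplit l).1, b :: (altSplit l).2) := by
  simp [altSplit]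

lemma altSplit_dbl {α : Type*} (l : List α) : altSplit (dbl l) = (l, l) := by
  induction l with
  | nil => rfl
  | cons a l ih => rw [dbl, altSplit_cons₂, ih]

lemma mem_dbl {α : Type*} {x : α} {l : List α} : x ∈ dbl l ↔ x ∈ l := by
  induction l with
  | nil => exact Iff.rfl
  | cons a l ih => simp [dbl, ih, or_assoc]

lemma coe_dbl (l : List ℕ) : (↑(dbl l) : Multiset ℕ) = ↑l + ↑l := by
  induction l with
  | nil => rfl
  | cons a l ih =>
    show (a ::ₘ a ::ₘ ↑(dbl l)) = (a ::ₘ (l : Multiset ℕ)) + (a ::ₘ (l : Multiset ℕ))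
    rw [ih]
    simp only [← Multiset.singleton_add]
    abel

lemma pairwise_dbl {l : List ℕ} (h : l.Pairwise (· ≤ ·)) : (dbl l).Pairwise (· ≤ ·) := by
  induction l with
  | nil => exact List.Pairwise.nil
  | cons a l ih =>
    rw [List.pairwise_cons] at h
    rw [dbl, List.pairwise_cons, List.pairwise_cons]
    refine ⟨?_, ?_, ih h.2⟩
    · intro x hx
      rcases List.mem_cons.mp hx with rfl | hx
      · exact le_refl x
      · exact h.1 x (mem_dbl.mp hx)
    · intro x hx
      exact h.1 x (mem_dbl.mp hx)

lemma getLB (t : ℕ) : ∀ (l : List ℕ), l.Pairwise (fun a b => a + t ≤ b) →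
    ∀ (b : ℕ), (∀ x ∈ l, b ≤ x) → ∀ i (h : i < l.length), i * t + b ≤ l[i] := by
  intro l
  induction l with
  | nil => intro _ _ _ i h; simp at h
  | cons a l ih =>
    intro hp b hb i h
    rw [List.pairwise_cons] at hp
    cases i with
    | zero => simpa using hb a List.mem_cons_self
    | succ i =>
      have hstep : ∀ x ∈ l, b + t ≤ x := fun x hx =>
        le_trans (by have := hb a List.mem_cons_self; omega) (hp.1 x hx)
      have := ih hp.2 (b + t) hstep i (by simpa using h)
      have hm : (i + 1) * t = i * t + t := by ring
      simp only [List.getElem_cons_succ]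
      omega

def tailL (t n : ℕ) : List ℕ := (List.range n).map (fun j => (j + 3) * t + 3)

lemma tail_pairwise (t n : ℕ) : (tailL t n).Pairwise (fun a b => a + t ≤ b) := by
  rw [tailL, List.pairwise_map]
  refine (List.pairwise_lt_range (n := n)).imp ?_
  intro i j hij
  have h1 : (i + 4) * t ≤ (j + 3) * t := Nat.mul_le_mul_right _ (by omega)
  have h2 : (i + 4) * t = (i + 3) * t + t := by ring
  omega

lemma mem_tail {t n x : ℕ} (hx : x ∈ tailL t n) : 3 * t + 3 ≤ x := by
  rw [tailL, List.mem_map] at hx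
  obtain ⟨j, -, rfl⟩ := hx
  have : 3 * t ≤ (j + 3) * t := Nat.mul_le_mul_right _ (by omega)
  omega

lemma getElem_tail (t n k : ℕ) (h : k < (tailL t n).length) :
    (tailL t n)[k] = (k + 3) * t + 3 := by
  simp [tailL]

lemma length_tail (t n : ℕ) : (tailL t n).length = n := by simp [tailL]

lemma list3_pairwise (t n a b c : ℕ) (hab : a + t ≤ b) (hbc : b + t ≤ c) (hac : a + t ≤ c)
    (hc : c + t ≤ 3 * t + 3) :
    ([a, b, c] ++ tailL t n).Pairwise (fun x y => x + t ≤ y) := by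
  rw [List.pairwise_append]
  refine ⟨by simp [hab, hbc, hac], tail_pairwise t n, ?_⟩
  intro x hx y hy
  have hy' := mem_tail hy
  simp only [List.mem_cons, List.not_mem_nil, or_false] at hx
  rcases hx with rfl | rfl | rfl <;> omega

lemma sorted_of_pairwise {l : List ℕ} {t : ℕ} (h : l.Pairwise (fun a b => a + t ≤ b)) :
    l.Sorted (· ≤ ·) := h.imp (fun hab => by omega)

lemma sorted3_tail (t n a b c : ℕ) (hab : a ≤ b) (hbc : b ≤ c) (hc : c ≤ 3 * t + 3) :
    ([a, b, c] ++ tailL t n).Sorted (· ≤ ·) := by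
  rw [List.Sorted, List.pairwise_append]
  refine ⟨by simp [hab, hbc, le_trans hab hbc], sorted_of_pairwise (tail_pairwise t n), ?_⟩
  intro x hx y hy
  have hy' := mem_tail hy
  simp only [List.mem_cons, List.not_mem_nil, or_false] at hx
  rcases hx with rfl | rfl | rfl <;> omega

lemma merged_sorted (t n m1 m2 m3 m4 m5 m6 : ℕ)
    (h12 : m1 ≤ m2) (h23 : m2 ≤ m3) (h34 : m3 ≤ m4) (h45 : m4 ≤ m5) (h56 : m5 ≤ m6)
    (h6 : m6 ≤ 3 * t + 3) :
    ([m1, m2, m3, m4, m5, m6] ++ dbl (tailL t n)).Sorted (· ≤ ·) := by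
  rw [List.Sorted, List.pairwise_append]
  refine ⟨?_, pairwise_dbl (sorted_of_pairwise (tail_pairwise t n)), ?_⟩
  · have hchain : ([m1, m2, m3, m4, m5, m6]).IsChain (· ≤ ·) := by
      simp only [List.isChain_cons_cons, List.isChain_singleton, and_true]
      exact ⟨h12, h23, h34, h45, h56⟩
    exact List.isChain_iff_pairwise.mp hchain
  · intro x hx y hy
    have hy' := mem_tail (mem_dbl.mp hy)
    simp only [List.mem_cons, List.not_mem_nil, or_false] at hx
    rcases hx with rfl | rfl | rfl | rfl | rfl | rfl <;> omega

lemma getUB (t n a b c : ℕ) (ha : a ≤ 3) (hb : b ≤ t + 3) (hc : c ≤ 2 * t + 3) :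
    ∀ i (h : i < ([a, b, c] ++ tailL t n).length), ([a, b, c] ++ tailL t n)[i] ≤ i * t + 3
  | 0, _ => by simpa using ha
  | 1, _ => by
    show b ≤ 1 * t + 3
    omega
  | 2, _ => by
    show c ≤ 2 * t + 3
    exact hc
  | (k+3), h => by
    have hk : k < (tailL t n).length := by
      simp only [List.length_append, List.length_cons, List.length_nil] at h; omega
    show (tailL t n)[k]'hk ≤ (k + 3) * t + 3
    rw [getElem_tail]

lemma sortPair_calc (m1 m2 m3 m4 m5 m6 : ℕ) (tl : List ℕ) (P Q : Multiset ℕ)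
    (hPQ : P + Q = ↑[m1, m2, m3, m4, m5, m6])
    (hsorted : ([m1, m2, m3, m4, m5, m6] ++ dbl tl).Sorted (· ≤ ·)) :
    sortPair (P + ↑tl) (Q + ↑tl) = (↑([m1, m3, m5] ++ tl), ↑([m2, m4, m6] ++ tl)) := by
  have h1 : (P + ↑tl) + (Q + ↑tl) = ↑([m1, m2, m3, m4, m5, m6] ++ dbl tl) := by
    have h2 : ((↑([m1, m2, m3, m4, m5, m6] ++ dbl tl)) : Multiset ℕ)
        = (↑[m1, m2, m3, m4, m5, m6] : Multiset ℕ) + ↑(dbl tl) := rfl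
    rw [h2, coe_dbl, ← hPQ]
    abel
  have hsplit : altSplit ([m1, m2, m3, m4, m5, m6] ++ dbl tl)
      = (m1 :: m3 :: m5 :: tl, m2 :: m4 :: m6 :: tl) := by
    show altSplit (m1 :: m2 :: (m3 :: m4 :: (m5 :: m6 :: dbl tl))) = _
    rw [altSplit_cons₂, altSplit_cons₂, altSplit_cons₂, altSplit_dbl]
  unfold sortPair
  rw [h1, mSort_coe _ hsorted, hsplit]
  rfl

lemma coe_tail_ne (t n : ℕ) (a b c a' b' c' : ℕ)
    (s1 : ([a, b, c] ++ tailL t n).Sorted (· ≤ ·))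
    (s2 : ([a', b', c'] ++ tailL t n).Sorted (· ≤ ·))
    (hne : ¬(a = a' ∧ b = b' ∧ c = c')) :
    (↑([a, b, c] ++ tailL t n) : Multiset ℕ) ≠ ↑([a', b', c'] ++ tailL t n) := by
  intro h
  have h2 := congrArg mSort h
  rw [mSort_coe _ s1, mSort_coe _ s2] at h2
  simp only [List.cons_append, List.cons.injEq, and_true] at h2
  exact hne ⟨h2.1, h2.2.1, h2.2.2⟩

lemma sum_six (a b c a' b' c' m1 m2 m3 m4 m5 m6 : ℕ)
    (h : ({a, b, c} : Multiset ℕ) + ({a', b', c'} : Multiset ℕ)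
       = ({m1, m2, m3, m4, m5, m6} : Multiset ℕ)) :
    ({a, b, c} : Multiset ℕ) + ({a', b', c'} : Multiset ℕ)
       = ↑[m1, m2, m3, m4, m5, m6] := h


/-- for a t-spread monomial u of degree d ≥ 3 with smallest index ≥ 3,
with v = ∏_{j=4}^{d} x_{(j−1)t+3}, the four monomials x₁x_{t+1}x_{2t+3}v,
x₂x_{t+2}x_{2t+3}v, x₁x_{t+2}x_{2t+2}v, x₁x_{t+3}x_{2t+3}v are minimal generators of
B_t(u) and form an induced 4-cycle in the sorted graph. -/
theorem i1_ge_three_cycle (t d : ℕ) (ht : 1 ≤ t) (hd : 3 ≤ d) (u : Multiset ℕ)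
    (hcard : Multiset.card u = d) (hspread : TSpread t u) (hmin : ∀ i ∈ u, 3 ≤ i) :
    ((({1, t + 1, 2 * t + 3} : Multiset ℕ) +
        ↑((List.range (d - 3)).map (fun j => (j + 3) * t + 3))) ∈ BtGens t u ∧
     (({2, t + 2, 2 * t + 3} : Multiset ℕ) +
        ↑((List.range (d - 3)).map (fun j => (j + 3) * t + 3))) ∈ BtGens t u ∧
     (({1, t + 2, 2 * t + 2} : Multiset ℕ) +
        ↑((List.range (d - 3)).map (fun j => (j + 3) * t + 3))) ∈ BtGens t u ∧
     (({1, t + 3, 2 * t + 3} : Multiset ℕ) +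
        ↑((List.range (d - 3)).map (fun j => (j + 3) * t + 3))) ∈ BtGens t u) ∧
    (let v : Multiset ℕ := ↑((List.range (d - 3)).map (fun j => (j + 3) * t + 3));
     let m₁ : Multiset ℕ := {1, t + 1, 2 * t + 3} + v;
     let m₂ : Multiset ℕ := {2, t + 2, 2 * t + 3} + v;
     let m₃ : Multiset ℕ := {1, t + 2, 2 * t + 2} + v;
     let m₄ : Multiset ℕ := {1, t + 3, 2 * t + 3} + v;
     List.Pairwise (· ≠ ·) [m₁, m₂, m₃, m₄] ∧
     SortedPair m₁ m₂ ∧ SortedPair m₂ m₃ ∧ SortedPair m₃ m₄ ∧ SortedPair m₄ m₁ ∧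
     ¬ SortedPair m₁ m₃ ∧ ¬ SortedPair m₃ m₁ ∧
     ¬ SortedPair m₂ m₄ ∧ ¬ SortedPair m₄ m₂) := by
  set n := d - 3 with hn
  have htl : (List.range (d - 3)).map (fun j => (j + 3) * t + 3) = tailL t n := rfl
  rw [htl]
  -- pairwise (t-spread) facts for the four generator lists
  have pw₁ : ([1, t + 1, 2 * t + 3] ++ tailL t n).Pairwise (fun x y => x + t ≤ y) :=
    list3_pairwise t n _ _ _ (by omega) (by omega) (by omega) (by omega)
  have pw₂ : ([2, t + 2, 2 * t + 3] ++ tailL t n).Pairwise (fun x y => x + t ≤ y) :=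
    list3_pairwise t n _ _ _ (by omega) (by omega) (by omega) (by omega)
  have pw₃ : ([1, t + 2, 2 * t + 2] ++ tailL t n).Pairwise (fun x y => x + t ≤ y) :=
    list3_pairwise t n _ _ _ (by omega) (by omega) (by omega) (by omega)
  have pw₄ : ([1, t + 3, 2 * t + 3] ++ tailL t n).Pairwise (fun x y => x + t ≤ y) :=
    list3_pairwise t n _ _ _ (by omega) (by omega) (by omega) (by omega)
  -- facts about mSort u
  have hUlen : (mSort u).length = d := by rw [mSort, Multiset.length_sort, hcard]
  have hUub : ∀ i (h : i < (mSort u).length), i * t + 3 ≤ (mSort u)[i] := by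
    have htrans : IsTrans ℕ (fun a b => a + t ≤ b) := ⟨fun a b c hab hbc => by omega⟩
    have hpw : (mSort u).Pairwise (fun a b => a + t ≤ b) :=
      List.isChain_iff_pairwise.mp hspread
    exact getLB t (mSort u) hpw 3 (fun x hx => hmin x ((Multiset.mem_sort _).mp hx))
  have hlen3 : ∀ (a b c : ℕ), ([a, b, c] ++ tailL t n).length = d := by
    intro a b c
    simp only [List.length_append, List.length_cons, List.length_nil, length_tail]
    omega
  -- membership helper
  have hmem : ∀ (a b c : ℕ), a ≤ 3 → b ≤ t + 3 → c ≤ 2 * t + 3 →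
      ([a, b, c] ++ tailL t n).Pairwise (fun x y => x + t ≤ y) →
      (({a, b, c} : Multiset ℕ) + ↑(tailL t n)) ∈ BtGens t u := by
    intro a b c ha hb hc hpw
    have hcoe : ({a, b, c} : Multiset ℕ) + ↑(tailL t n) = ↑([a, b, c] ++ tailL t n) := rfl
    have hms : mSort (({a, b, c} : Multiset ℕ) + ↑(tailL t n)) = [a, b, c] ++ tailL t n := by
      rw [hcoe]; exact mSort_coe _ (sorted_of_pairwise hpw)
    refine ⟨?_, ?_, ?_⟩
    · rw [hcoe]
      simp only [Multiset.coe_card, hlen3 a b c, hcard]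
    · rw [TSpread, hms]; exact hpw.isChain
    · rw [Dominates, hms, List.forall₂_iff_get]
      refine ⟨by rw [hlen3 a b c, hUlen], ?_⟩
      intro i h₁ h₂
      have hub := hUub i h₂
      have hLi := getUB t n a b c ha hb hc i h₁
      simp only [List.get_eq_getElem]
      omega
  refine ⟨⟨?_, ?_, ?_, ?_⟩, ?_⟩
  · exact hmem 1 (t + 1) (2 * t + 3) (by omega) (by omega) (by omega) pw₁
  · exact hmem 2 (t + 2) (2 * t + 3) (by omega) (by omega) (by omega) pw₂
  · exact hmem 1 (t + 2) (2 * t + 2) (by omega) (by omega) (by omega) pw₃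
  · exact hmem 1 (t + 3) (2 * t + 3) (by omega) (by omega) (by omega) pw₄
  intro v m₁ m₂ m₃ m₄
  -- sum identities
  have S12 : ({1, t + 1, 2 * t + 3} : Multiset ℕ) + ({2, t + 2, 2 * t + 3} : Multiset ℕ)
      = ↑[1, 2, t + 1, t + 2, 2 * t + 3, 2 * t + 3] := by
    apply sum_six
    simp only [Multiset.insert_eq_cons, ← Multiset.singleton_add]; abel
  have S23 : ({2, t + 2, 2 * t + 3} : Multiset ℕ) + ({1, t + 2, 2 * t + 2} : Multiset ℕ)
      = ↑[1, 2, t + 2, t + 2, 2 * t + 2, 2 * t + 3] := by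
    apply sum_six
    simp only [Multiset.insert_eq_cons, ← Multiset.singleton_add]; abel
  have S34 : ({1, t + 2, 2 * t + 2} : Multiset ℕ) + ({1, t + 3, 2 * t + 3} : Multiset ℕ)
      = ↑[1, 1, t + 2, t + 3, 2 * t + 2, 2 * t + 3] := by
    apply sum_six
    simp only [Multiset.insert_eq_cons, ← Multiset.singleton_add]; abel
  have S41 : ({1, t + 3, 2 * t + 3} : Multiset ℕ) + ({1, t + 1, 2 * t + 3} : Multiset ℕ)
      = ↑[1, 1, t + 1, t + 3, 2 * t + 3, 2 * t + 3] := by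
    apply sum_six
    simp only [Multiset.insert_eq_cons, ← Multiset.singleton_add]; abel
  have S13 : ({1, t + 1, 2 * t + 3} : Multiset ℕ) + ({1, t + 2, 2 * t + 2} : Multiset ℕ)
      = ↑[1, 1, t + 1, t + 2, 2 * t + 2, 2 * t + 3] := by
    apply sum_six
    simp only [Multiset.insert_eq_cons, ← Multiset.singleton_add]; abel
  have S24 : ({2, t + 2, 2 * t + 3} : Multiset ℕ) + ({1, t + 3, 2 * t + 3} : Multiset ℕ)
      = ↑[1, 2, t + 2, t + 3, 2 * t + 3, 2 * t + 3] := by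
    apply sum_six
    simp only [Multiset.insert_eq_cons, ← Multiset.singleton_add]; abel
  -- sortPair computations
  have C12 := sortPair_calc 1 2 (t+1) (t+2) (2*t+3) (2*t+3) (tailL t n) _ _ S12
    (merged_sorted t n _ _ _ _ _ _ (by omega) (by omega) (by omega) (by omega) (by omega) (by omega))
  have C23 := sortPair_calc 1 2 (t+2) (t+2) (2*t+2) (2*t+3) (tailL t n) _ _ S23
    (merged_sorted t n _ _ _ _ _ _ (by omega) (by omega) (by omega) (by omega) (by omega) (by omega))
  have C34 := sortPair_calc 1 1 (t+2) (t+3) (2*t+2) (2*t+3) (tailL t n) _ _ S34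
    (merged_sorted t n _ _ _ _ _ _ (by omega) (by omega) (by omega) (by omega) (by omega) (by omega))
  have C41 := sortPair_calc 1 1 (t+1) (t+3) (2*t+3) (2*t+3) (tailL t n) _ _ S41
    (merged_sorted t n _ _ _ _ _ _ (by omega) (by omega) (by omega) (by omega) (by omega) (by omega))
  have C13 := sortPair_calc 1 1 (t+1) (t+2) (2*t+2) (2*t+3) (tailL t n) _ _ S13
    (merged_sorted t n _ _ _ _ _ _ (by omega) (by omega) (by omega) (by omega) (by omega) (by omega))
  have C31 := sortPair_calc 1 1 (t+1) (t+2) (2*t+2) (2*t+3) (tailL t n) _ _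
    ((add_comm _ _).trans S13)
    (merged_sorted t n _ _ _ _ _ _ (by omega) (by omega) (by omega) (by omega) (by omega) (by omega))
  have C24 := sortPair_calc 1 2 (t+2) (t+3) (2*t+3) (2*t+3) (tailL t n) _ _ S24
    (merged_sorted t n _ _ _ _ _ _ (by omega) (by omega) (by omega) (by omega) (by omega) (by omega))
  have C42 := sortPair_calc 1 2 (t+2) (t+3) (2*t+3) (2*t+3) (tailL t n) _ _
    ((add_comm _ _).trans S24)
    (merged_sorted t n _ _ _ _ _ _ (by omega) (by omega) (by omega) (by omega) (by omega) (by omega))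
  -- sortedness of the relevant 3-lists (for injectivity arguments)
  have s₁ := sorted_of_pairwise pw₁
  have s₂ := sorted_of_pairwise pw₂
  have s₃ := sorted_of_pairwise pw₃
  have s₄ := sorted_of_pairwise pw₄
  have sA : ([1, t+1, 2*t+2] ++ tailL t n).Sorted (· ≤ ·) :=
    sorted3_tail t n _ _ _ (by omega) (by omega) (by omega)
  have sB : ([1, t+2, 2*t+3] ++ tailL t n).Sorted (· ≤ ·) :=
    sorted3_tail t n _ _ _ (by omega) (by omega) (by omega)
  have sC : ([2, t+3, 2*t+3] ++ tailL t n).Sorted (· ≤ ·) :=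
    sorted3_tail t n _ _ _ (by omega) (by omega) (by omega)
  refine ⟨?_, Or.inl C12, Or.inr C23, Or.inl C34, Or.inr C41, ?_, ?_, ?_, ?_⟩
  · -- pairwise distinct
    have h12 : m₁ ≠ m₂ := coe_tail_ne t n _ _ _ _ _ _ s₁ s₂ (by omega)
    have h13 : m₁ ≠ m₃ := coe_tail_ne t n _ _ _ _ _ _ s₁ s₃ (by omega)
    have h14 : m₁ ≠ m₄ := coe_tail_ne t n _ _ _ _ _ _ s₁ s₄ (by omega)
    have h23 : m₂ ≠ m₃ := coe_tail_ne t n _ _ _ _ _ _ s₂ s₃ (by omega)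
    have h24 : m₂ ≠ m₄ := coe_tail_ne t n _ _ _ _ _ _ s₂ s₄ (by omega)
    have h34 : m₃ ≠ m₄ := coe_tail_ne t n _ _ _ _ _ _ s₃ s₄ (by omega)
    simp [List.pairwise_cons, h12, h13, h14, h23, h24, h34]
  · -- ¬ SortedPair m₁ m₃
    rintro (h | h) <;> rw [C13] at h
    · exact coe_tail_ne t n 1 (t+1) (2*t+2) 1 (t+1) (2*t+3) sA s₁ (by omega)
        (congrArg Prod.fst h)
    · exact coe_tail_ne t n 1 (t+1) (2*t+2) 1 (t+2) (2*t+2) sA s₃ (by omega)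
        (congrArg Prod.fst h)
  · -- ¬ SortedPair m₃ m₁
    rintro (h | h) <;> rw [C31] at h
    · exact coe_tail_ne t n 1 (t+1) (2*t+2) 1 (t+2) (2*t+2) sA s₃ (by omega)
        (congrArg Prod.fst h)
    · exact coe_tail_ne t n 1 (t+1) (2*t+2) 1 (t+1) (2*t+3) sA s₁ (by omega)
        (congrArg Prod.fst h)
  · -- ¬ SortedPair m₂ m₄
    rintro (h | h) <;> rw [C24] at h
    · exact coe_tail_ne t n 1 (t+2) (2*t+3) 2 (t+2) (2*t+3) sB s₂ (by omega)
        (congrArg Prod.fst h)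
    · exact coe_tail_ne t n 1 (t+2) (2*t+3) 1 (t+3) (2*t+3) sB s₄ (by omega)
        (congrArg Prod.fst h)
  · -- ¬ SortedPair m₄ m₂
    rintro (h | h) <;> rw [C42] at h
    · exact coe_tail_ne t n 1 (t+2) (2*t+3) 1 (t+3) (2*t+3) sB s₄ (by omega)
        (congrArg Prod.fst h)
    · exact coe_tail_ne t n 1 (t+2) (2*t+3) 2 (t+2) (2*t+3) sB s₂ (by omega)
        (congrArg Prod.fst h)
end

section
/- Fix t ≥ 1 and d ≥ 2. For any t-spread monomial u of degree d, the set of minimal generators of B_t(u) is sortable: if v, w are t-spread monomials componentwise dominated by u, then both components of sort(v,w) are again t-spread monomials componentwise dominated by u. -/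
/-! ### Auxiliary lemmas -/

lemma altSplit_len {α : Type*} : ∀ l : List α,
    (altSplit l).1.length = (l.length + 1) / 2 ∧ (altSplit l).2.length = l.length / 2 := by
  intro l
  induction l with
  | nil => simp [altSplit]
  | cons a l ih =>
    simp only [altSplit, List.length_cons]
    constructor
    · omega
    · omega

lemma altSplit_get? {α : Type*} : ∀ (l : List α) (i : ℕ),
    (altSplit l).1[i]? = l[2*i]? ∧ (altSplit l).2[i]? = l[2*i+1]? := by
  intro l
  induction l with
  | nil => intro i; simp [altSplit]
  | cons a l ih =>
    intro i
    constructor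
    · cases i with
      | zero => simp [altSplit]
      | succ n =>
        have h := (ih n).2
        rw [show 2*(n+1) = (2*n+1)+1 by ring]
        simpa [altSplit] using h
    · have h := (ih i).1
      simpa [altSplit] using h

/-- In a sorted list, if the `k`-th entry is `< X` then at least `k+1` entries are `< X`. -/
lemma count_ge_of_get_lt {L : List ℕ} (hL : L.Pairwise (· ≤ ·)) {k : ℕ} (hk : k < L.length)
    {X : ℕ} (hx : L.get ⟨k, hk⟩ < X) :
    k + 1 ≤ L.countP (fun y => decide (y < X)) := by
  have hsplit : L.countP (fun y => decide (y < X)) =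
      (L.take (k+1)).countP (fun y => decide (y < X)) +
      (L.drop (k+1)).countP (fun y => decide (y < X)) := by
    conv_lhs => rw [← List.take_append_drop (k+1) L]
    rw [List.countP_append]
  have htake : (L.take (k+1)).countP (fun y => decide (y < X)) = (L.take (k+1)).length := by
    apply List.countP_eq_length.2
    intro x hx'
    obtain ⟨i, hi, hval⟩ := List.mem_iff_getElem.mp hx'
    have hi' : i < k + 1 := lt_of_lt_of_le hi (by simp [List.length_take])
    have hig : i < L.length := lt_of_lt_of_le hi' hk
    have hxe : x = L[i] := by rw [← hval]; simp [List.getElem_take]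
    have hle : L[i] ≤ L.get ⟨k, hk⟩ := by
      rcases lt_or_eq_of_le (Nat.lt_succ_iff.mp hi') with h | h
      · exact (List.pairwise_iff_get.mp hL) ⟨i, hig⟩ ⟨k, hk⟩ h
      · subst h; simp
    simpa [hxe] using lt_of_le_of_lt hle hx
  have hlen : (L.take (k+1)).length = k + 1 := by simp [List.length_take]; omega
  omega

/-- In a sorted list, if at least `k+1` entries are `< X` then the `k`-th entry is `< X`. -/
lemma get_lt_of_count_ge {L : List ℕ} (hL : L.Pairwise (· ≤ ·)) {k : ℕ} (hk : k < L.length)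
    {X : ℕ} (hc : k + 1 ≤ L.countP (fun y => decide (y < X))) :
    L.get ⟨k, hk⟩ < X := by
  by_contra h
  push_neg at h
  have hsplit : L.countP (fun y => decide (y < X)) =
      (L.take k).countP (fun y => decide (y < X)) +
      (L.drop k).countP (fun y => decide (y < X)) := by
    conv_lhs => rw [← List.take_append_drop k L]
    rw [List.countP_append]
  have hdrop : (L.drop k).countP (fun y => decide (y < X)) = 0 := by
    apply List.countP_eq_zero.2
    intro x hx'
    obtain ⟨i, hi, hval⟩ := List.mem_iff_getElem.mp hx'
    have hig : k + i < L.length := by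
      have : i < L.length - k := by simpa using hi
      omega
    have hxe : x = L[k+i] := by rw [← hval]; simp [List.getElem_drop]
    have hle : L.get ⟨k, hk⟩ ≤ L[k+i] := by
      rcases Nat.eq_zero_or_pos i with h0 | h0
      · subst h0; simp
      · have h2 := (List.pairwise_iff_get.mp hL) ⟨k, hk⟩ ⟨k+i, hig⟩ (Fin.mk_lt_mk.mpr (by omega))
        simpa using h2
    simp only [List.get_eq_getElem] at hle h
    simp only [hxe, decide_eq_true_eq]
    omega
  have htk : (L.take k).countP (fun y => decide (y < X)) ≤ k :=
    le_trans List.countP_le_length (by simp [List.length_take])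
  omega

/-- In a sorted `t`-spread list, at most one entry lies in any window `[x, x+t)`. -/
lemma spread_count {A : List ℕ} (hA : A.Pairwise (· ≤ ·)) {t : ℕ}
    (hsp : A.Chain' (fun a b => a + t ≤ b)) (x : ℕ) :
    A.countP (fun y => decide (y < x + t)) ≤ A.countP (fun y => decide (y < x)) + 1 := by
  by_contra hc
  push_neg at hc
  set m := A.countP (fun y => decide (y < x)) with hm
  have hlen : m + 2 ≤ A.length := le_trans hc List.countP_le_length
  have h1 : A.get ⟨m+1, by omega⟩ < x + t :=
    get_lt_of_count_ge hA (by omega) (by omega)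
  have h0 : ¬ A.get ⟨m, by omega⟩ < x := by
    intro h
    have := count_ge_of_get_lt hA (k := m) (by omega) h
    omega
  have hch := List.isChain_iff_getElem.mp hsp m (by omega)
  simp only [List.get_eq_getElem] at h1 h0 hch
  omega

/-- the set of minimal generators of B_t(u) is sortable: both components of
sort(v,w) are again t-spread monomials componentwise dominated by u. -/
theorem BtGens_sortable (t d : ℕ) (ht : 1 ≤ t) (hd : 2 ≤ d) (u : Multiset ℕ)
    (hcard : Multiset.card u = d) (hu : TSpread t u) :
    ∀ v w : Multiset ℕ, v ∈ BtGens t u → w ∈ BtGens t u →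
      (sortPair v w).1 ∈ BtGens t u ∧ (sortPair v w).2 ∈ BtGens t u := by
  intro v w hv hw
  obtain ⟨hcv, hsv, hdv⟩ := hv
  obtain ⟨hcw, hsw, hdw⟩ := hw
  set A := mSort v with hA
  set B := mSort w with hB
  set U := mSort u with hU
  set L := mSort (v + w) with hLdef
  have hAs : A.Pairwise (· ≤ ·) := Multiset.pairwise_sort _ _
  have hBs : B.Pairwise (· ≤ ·) := Multiset.pairwise_sort _ _
  have hUs : U.Pairwise (· ≤ ·) := Multiset.pairwise_sort _ _
  have hLs : L.Pairwise (· ≤ ·) := Multiset.pairwise_sort _ _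
  have hAv : (↑A : Multiset ℕ) = v := Multiset.sort_eq _ _
  have hBw : (↑B : Multiset ℕ) = w := Multiset.sort_eq _ _
  have hUu : (↑U : Multiset ℕ) = u := Multiset.sort_eq _ _
  have hLvw : (↑L : Multiset ℕ) = v + w := Multiset.sort_eq _ _
  have hperm : L.Perm (A ++ B) := by
    rw [← Multiset.coe_eq_coe, hLvw, ← Multiset.coe_add, hAv, hBw]
  have hlenA : A.length = d := by
    have h := Multiset.coe_card A
    rw [hAv] at h; omega
  have hlenB : B.length = d := by
    have h := Multiset.coe_card B
    rw [hBw] at h; omega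
  have hlenU : U.length = d := by
    have h := Multiset.coe_card U
    rw [hUu] at h; omega
  have hlenL : L.length = 2 * d := by
    have h := Multiset.coe_card L
    rw [hLvw, Multiset.card_add] at h; omega
  have hsvA : A.Chain' (fun a b => a + t ≤ b) := hsv
  have hswB : B.Chain' (fun a b => a + t ≤ b) := hsw
  have hdvA : List.Forall₂ (· ≤ ·) A U := hdv
  have hdwB : List.Forall₂ (· ≤ ·) B U := hdw
  -- count splitting along the permutation L ~ A ++ B
  have hsplitc : ∀ X : ℕ, L.countP (fun y => decide (y < X)) =
      A.countP (fun y => decide (y < X)) + B.countP (fun y => decide (y < X)) := by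
    intro X
    rw [hperm.countP_eq, List.countP_append]
  -- the "gap-2" spread property of L
  have hspL : ∀ k (hk2 : k + 2 < L.length), L[k] + t ≤ L[k+2] := by
    intro k hk2
    by_contra hcon
    push_neg at hcon
    have hk : k < L.length := by omega
    have hcountL : k + 3 ≤ L.countP (fun y => decide (y < L[k] + t)) := by
      have := count_ge_of_get_lt hLs (k := k+2) hk2 (X := L[k] + t) (by simpa using hcon)
      omega
    have hAc := spread_count hAs hsvA L[k]
    have hBc := spread_count hBs hswB L[k]
    have hmid : L.countP (fun y => decide (y < L[k])) ≤ k := by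
      by_contra hc2
      push_neg at hc2
      have := get_lt_of_count_ge hLs hk (X := L[k]) (by omega)
      simp at this
    have e1 := hsplitc (L[k] + t)
    have e2 := hsplitc L[k]
    omega
  -- the dominance property of L
  have hdomL : ∀ j (hj : 2*j+1 < L.length) (hjU : j < U.length), L[2*j+1] ≤ U[j] := by
    intro j hj hjU
    have hjA : j < A.length := by omega
    have hjB : j < B.length := by omega
    have hAU : A[j] ≤ U[j] := by
      have := (List.forall₂_iff_get.mp hdvA).2 j hjA (by omega)
      simpa using this
    have hBU : B[j] ≤ U[j] := by
      have := (List.forall₂_iff_get.mp hdwB).2 j hjB (by omega)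
      simpa using this
    have hcA : j + 1 ≤ A.countP (fun y => decide (y < U[j] + 1)) :=
      count_ge_of_get_lt hAs hjA (by simp; omega)
    have hcB : j + 1 ≤ B.countP (fun y => decide (y < U[j] + 1)) :=
      count_ge_of_get_lt hBs hjB (by simp; omega)
    have hc : 2*j + 2 ≤ L.countP (fun y => decide (y < U[j] + 1)) := by
      rw [hsplitc]; omega
    have := get_lt_of_count_ge hLs hj (X := U[j] + 1) (by omega)
    simp only [List.get_eq_getElem] at this
    omega
  -- properties of the two altSplit components
  set O := (altSplit L).1 with hO
  set E := (altSplit L).2 with hE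
  have hOlen : O.length = d := by
    have h : O.length = (L.length + 1) / 2 := (altSplit_len L).1
    rw [hlenL] at h
    omega
  have hElen : E.length = d := by
    have h : E.length = L.length / 2 := (altSplit_len L).2
    rw [hlenL] at h
    omega
  have hOget : ∀ i j (h : i < O.length) (h2 : j < L.length), j = 2*i → O[i] = L[j] := by
    intro i j h h2 hj
    subst hj
    have hq := (altSplit_get? L i).1
    rw [List.getElem?_eq_getElem h, List.getElem?_eq_getElem h2] at hq
    exact Option.some.inj hq
  have hEget : ∀ i j (h : i < E.length) (h2 : j < L.length), j = 2*i+1 → E[i] = L[j] := by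
    intro i j h h2 hj
    subst hj
    have hq := (altSplit_get? L i).2
    rw [List.getElem?_eq_getElem h, List.getElem?_eq_getElem h2] at hq
    exact Option.some.inj hq
  have hLpw := List.pairwise_iff_get.mp hLs
  have hOs : O.Pairwise (· ≤ ·) := by
    apply List.pairwise_iff_get.mpr
    intro i j hij
    have h2i : 2 * (i : ℕ) < L.length := by omega
    have h2j : 2 * (j : ℕ) < L.length := by omega
    simp only [List.get_eq_getElem]
    rw [hOget i _ i.isLt h2i rfl, hOget j _ j.isLt h2j rfl]
    have := hLpw ⟨2*(i:ℕ), h2i⟩ ⟨2*(j:ℕ), h2j⟩ (Fin.mk_lt_mk.mpr (by omega))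
    simpa using this
  have hEs : E.Pairwise (· ≤ ·) := by
    apply List.pairwise_iff_get.mpr
    intro i j hij
    have h2i : 2 * (i : ℕ) + 1 < L.length := by omega
    have h2j : 2 * (j : ℕ) + 1 < L.length := by omega
    simp only [List.get_eq_getElem]
    rw [hEget i _ i.isLt h2i rfl, hEget j _ j.isLt h2j rfl]
    have := hLpw ⟨2*(i:ℕ)+1, h2i⟩ ⟨2*(j:ℕ)+1, h2j⟩ (Fin.mk_lt_mk.mpr (by omega))
    simpa using this
  have hmO : mSort ↑O = O :=
    List.Perm.eq_of_pairwise' (Multiset.pairwise_sort _ _) hOs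
      (Multiset.coe_eq_coe.mp (Multiset.sort_eq _ _))
  have hmE : mSort ↑E = E :=
    List.Perm.eq_of_pairwise' (Multiset.pairwise_sort _ _) hEs
      (Multiset.coe_eq_coe.mp (Multiset.sort_eq _ _))
  have hOE : ∀ i (h : i < O.length) (h2 : i < E.length), O[i] ≤ E[i] := by
    intro i h h2
    have h2i : 2*i < L.length := by omega
    have h2i1 : 2*i+1 < L.length := by omega
    rw [hOget i _ h h2i rfl, hEget i _ h2 h2i1 rfl]
    have := hLpw ⟨2*i, h2i⟩ ⟨2*i+1, h2i1⟩ (Fin.mk_lt_mk.mpr (by omega))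
    simpa using this
  constructor
  · -- first component
    show (↑O : Multiset ℕ) ∈ BtGens t u
    refine ⟨?_, ?_, ?_⟩
    · rw [Multiset.coe_card, hOlen, hcard]
    · show (mSort ↑O).Chain' (fun a b => a + t ≤ b)
      rw [hmO]
      apply List.isChain_iff_getElem.mpr
      intro i hi
      have h2 : 2*i + 2 < L.length := by omega
      rw [hOget i (2*i) (by omega) (by omega) rfl,
        hOget (i+1) (2*i+2) (by omega) (by omega) (by ring)]
      exact hspL (2*i) h2
    · show List.Forall₂ (· ≤ ·) (mSort ↑O) U
      rw [hmO]
      apply List.forall₂_iff_get.mpr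
      refine ⟨by omega, ?_⟩
      intro i h1 h2
      simp only [List.get_eq_getElem]
      calc O[i] ≤ E[i] := hOE i h1 (by omega)
        _ = L[2*i+1] := hEget i _ (by omega) (by omega) rfl
        _ ≤ U[i] := hdomL i (by omega) h2
  · -- second component
    show (↑E : Multiset ℕ) ∈ BtGens t u
    refine ⟨?_, ?_, ?_⟩
    · rw [Multiset.coe_card, hElen, hcard]
    · show (mSort ↑E).Chain' (fun a b => a + t ≤ b)
      rw [hmE]
      apply List.isChain_iff_getElem.mpr
      intro i hi
      have h2 : (2*i+1) + 2 < L.length := by omega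
      rw [hEget i (2*i+1) (by omega) (by omega) rfl,
        hEget (i+1) ((2*i+1)+2) (by omega) (by omega) (by ring)]
      exact hspL (2*i+1) h2
    · show List.Forall₂ (· ≤ ·) (mSort ↑E) U
      rw [hmE]
      apply List.forall₂_iff_get.mpr
      refine ⟨by omega, ?_⟩
      intro i h1 h2
      simp only [List.get_eq_getElem]
      calc E[i] = L[2*i+1] := hEget i _ h1 (by omega) rfl
        _ ≤ U[i] := hdomL i (by omega) h2
end

section
/- Let t ≥ 1 and d ≥ 3, and consider generators of B_t(u) for u = (∏_{i=1}^{d−1} x_{(i−1)t+2})·x_{(d−1)t+3}. Suppose v_1, v_2 ∈ A and v_3, v_4 ∈ B (defined below) are four distinct generators such that {v_1,v_2}, {v_2,v_3}, {v_3,v_4}, {v_4,v_1} are all sorted pairs. Then at least one of the pairs {v_1,v_3}, {v_2,v_4} is also sorted; i.e., these four vertices cannot form an induced 4-cycle in the sorted graph. -/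
namespace No4CycleAux

theorem altSplit_cons₂ {α : Type*} (x y : α) (l : List α) :
    altSplit (x :: y :: l) = (x :: (altSplit l).1, y :: (altSplit l).2) := rfl

theorem altSplit_flatMap (F G : ℕ → ℕ) :
    ∀ l : List ℕ, altSplit (l.flatMap fun j => [F j, G j]) = (l.map F, l.map G)
  | [] => rfl
  | a :: l => by
      simp only [List.flatMap_cons, List.cons_append, List.nil_append, List.map_cons,
        altSplit_cons₂, altSplit_flatMap F G l]

theorem coe_flatMap_pairs (F G : ℕ → ℕ) :
    ∀ l : List ℕ, (↑(l.flatMap fun j => [F j, G j]) : Multiset ℕ) = ↑(l.map F) + ↑(l.map G)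
  | [] => rfl
  | a :: l => by
      simp only [List.flatMap_cons, List.cons_append, List.nil_append, List.map_cons,
        ← Multiset.cons_coe, coe_flatMap_pairs F G l, ← Multiset.singleton_add]
      abel

theorem blocks_congr (F G f g : ℕ → ℕ) :
    ∀ l : List ℕ, (∀ j ∈ l, ({F j, G j} : Multiset ℕ) = {f j, g j}) →
      (↑(l.map F) + ↑(l.map G) : Multiset ℕ) = ↑(l.map f) + ↑(l.map g)
  | [], _ => rfl
  | a :: l, h => by
      have h1 := h a List.mem_cons_self
      have h2 := blocks_congr F G f g l (fun j hj => h j (List.mem_cons_of_mem a hj))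
      simp only [List.map_cons, ← Multiset.cons_coe, ← Multiset.singleton_add]
      have key : ∀ x y : ℕ, ∀ A B : Multiset ℕ,
          ({x} + A) + ({y} + B) = ({x, y} : Multiset ℕ) + (A + B) := by
        intro x y A B
        simp only [Multiset.insert_eq_cons, ← Multiset.singleton_add]
        abel
      rw [key, key, h1, h2]

theorem chain'_flatMap_pairs (F G : ℕ → ℕ) :
    ∀ (n s : ℕ), (∀ j, s ≤ j → j < s + n → F j ≤ G j) →
      (∀ j, s ≤ j → j + 1 < s + n → G j ≤ F (j + 1)) →
      List.Chain' (· ≤ ·) ((List.range' s n).flatMap fun j => [F j, G j])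
  | 0, s, _, _ => by simp [List.Chain']
  | 1, s, h1, _ => by
      simp only [List.range'_one, List.flatMap_cons, List.flatMap_nil, List.append_nil]
      exact List.isChain_pair.mpr (h1 s le_rfl (by omega))
  | (n + 2), s, h1, h2 => by
      have ih := chain'_flatMap_pairs F G (n + 1) (s + 1)
        (fun j hj hj' => h1 j (by omega) (by omega))
        (fun j hj hj' => h2 j (by omega) (by omega))
      rw [List.range'_succ]
      simp only [List.flatMap_cons, List.cons_append, List.nil_append]
      rw [List.range'_succ] at ih ⊢
      simp only [List.flatMap_cons, List.cons_append, List.nil_append] at ih ⊢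
      simp only [List.Chain'] at ih ⊢
      rw [List.isChain_cons_cons, List.isChain_cons_cons]
      exact ⟨h1 s le_rfl (by omega), h2 s le_rfl (by omega), ih⟩

/-- The generic generator of the set `A`. -/
def fA (t a j : ℕ) : ℕ := if j < a then j * t + 1 else j * t + 2

/-- Auxiliary index function describing the second output of the sort of a pair `(A, B)`. -/
def gB (t d b j : ℕ) : ℕ :=
  if j < b then j * t + 1 else if j < d - 1 then j * t + 2 else j * t + 3

def vA (t d a : ℕ) : Multiset ℕ := ↑((List.range d).map (fA t a))

def vB (t d b : ℕ) : Multiset ℕ := ↑((List.range (d - 1)).map (fA t b)) + {(d - 1) * t + 3}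

theorem mapG_split (t d b : ℕ) (hd : 1 ≤ d) (hb : b ≤ d - 1) :
    (↑((List.range d).map (gB t d b)) : Multiset ℕ) = vB t d b := by
  obtain ⟨e, rfl⟩ : ∃ e, d = e + 1 := ⟨d - 1, by omega⟩
  rw [List.range_succ, List.map_append]
  have h1 : (List.range e).map (gB t (e+1) b) = (List.range e).map (fA t b) := by
    apply List.map_congr_left
    intro j hj
    rw [List.mem_range] at hj
    simp only [gB, fA]
    split_ifs <;> omega
  have h2 : gB t (e+1) b e = e * t + 3 := by
    simp only [gB]
    split_ifs <;> omega
  rw [h1, List.map_singleton, h2, vB]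
  rfl

theorem sortPair_eq (t d : ℕ) (ht : 1 ≤ t) (hd : 3 ≤ d) (a b : ℕ)
    (ha : a ≤ d - 1) (hb : b ≤ d - 1) :
    sortPair (vA t d a) (vB t d b) = (vA t d (max a b), vB t d (min a b)) := by
  set F := fA t (max a b) with hF
  set G := gB t d (min a b) with hG
  set L := (List.range d).flatMap fun j => [F j, G j] with hLdef
  have hblocks : ∀ j ∈ List.range d, ({F j, G j} : Multiset ℕ) = {fA t a j, gB t d b j} := by
    intro j hj
    rw [List.mem_range] at hj
    simp only [hF, hG, fA, gB]
    rcases le_total a b with hab | hab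
    · rw [max_eq_right hab, min_eq_left hab]
      split_ifs <;> first | rfl | omega | exact Multiset.cons_swap _ _ _
    · rw [max_eq_left hab, min_eq_right hab]
  have hmul : (↑L : Multiset ℕ) = vA t d a + vB t d b := by
    rw [hLdef, coe_flatMap_pairs,
      blocks_congr F G (fA t a) (gB t d b) _ hblocks,
      mapG_split t d b (by omega) hb]
    rfl
  have hsorted : List.Chain' (· ≤ ·) L := by
    rw [hLdef, List.range_eq_range']
    apply chain'_flatMap_pairs
    · intro j _ hj
      simp only [hF, hG, fA, gB]
      split_ifs <;> omega
    · intro j _ hj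
      have hmt : (j + 1) * t = j * t + t := by ring
      simp only [hF, hG, fA, gB, hmt]
      split_ifs <;> omega
  have hms : mSort (vA t d a + vB t d b) = L := by
    rw [← hmul]
    refine List.Perm.eq_of_pairwise' (Multiset.pairwise_sort _ _) ?_
      (Multiset.coe_eq_coe.mp (Multiset.sort_eq _ _))
    exact List.isChain_iff_pairwise.mp hsorted
  rw [sortPair, hms, hLdef, altSplit_flatMap]
  refine Prod.ext rfl ?_
  exact mapG_split t d (min a b) (by omega) (by omega)

theorem sum_min (t x y : ℕ) : ∀ n : ℕ,
    ((List.range n).map (fA t x)).sum + min x n = ((List.range n).map (fA t y)).sum + min y n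
  | 0 => by simp
  | n + 1 => by
      have ih := sum_min t x y n
      rw [List.range_succ, List.map_append, List.map_append, List.sum_append, List.sum_append]
      simp only [List.map_singleton, List.sum_singleton, fA]
      split_ifs <;> omega

theorem vA_inj (t d x y : ℕ) (hx : x ≤ d) (hy : y ≤ d) (h : vA t d x = vA t d y) : x = y := by
  have hs := congrArg Multiset.sum h
  simp only [vA, Multiset.sum_coe] at hs
  have := sum_min t x y d
  omega

theorem vA_ne_vB (t d a b : ℕ) (ht : 1 ≤ t) (hd : 1 ≤ d) : vA t d a ≠ vB t d b := by
  intro h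
  have hm : (d - 1) * t + 3 ∈ vA t d a := by
    rw [h, vB]
    simp
  simp only [vA, Multiset.mem_coe, List.mem_map, List.mem_range] at hm
  obtain ⟨j, hj, hje⟩ := hm
  have hmul : j * t ≤ (d - 1) * t := Nat.mul_le_mul_right t (by omega)
  simp only [fA] at hje
  split_ifs at hje <;> omega

theorem sortedPair_comm (u v : Multiset ℕ) : SortedPair u v ↔ SortedPair v u := by
  simp only [SortedPair, sortPair, add_comm u v]
  tauto

theorem sorted_iff (t d : ℕ) (ht : 1 ≤ t) (hd : 3 ≤ d) (a b : ℕ)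
    (ha : a ≤ d - 1) (hb : b ≤ d - 1) :
    SortedPair (vA t d a) (vB t d b) ↔ b ≤ a := by
  rw [SortedPair, sortPair_eq t d ht hd a b ha hb]
  constructor
  · rintro (h | h)
    · have h1 : vA t d (max a b) = vA t d a := congrArg Prod.fst h
      have := vA_inj t d (max a b) a (by omega) (by omega) h1
      omega
    · exact absurd (congrArg Prod.fst h) (vA_ne_vB t d (max a b) b ht (by omega))
  · intro h
    rw [max_eq_left h, min_eq_right h]
    exact Or.inl rfl

end No4CycleAux

/-- four distinct generators v₁,v₂ ∈ A and v₃,v₄ ∈ B of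
B_t((∏_{i=1}^{d−1} x_{(i−1)t+2})·x_{(d−1)t+3}) with {v₁,v₂},{v₂,v₃},{v₃,v₄},{v₄,v₁}
sorted cannot form an induced 4-cycle: {v₁,v₃} or {v₂,v₄} is also sorted. -/
theorem no_induced_4cycle_A_B (t d : ℕ) (ht : 1 ≤ t) (hd : 3 ≤ d)
    (a₁ a₂ b₃ b₄ : ℕ) (ha₁ : a₁ ≤ d - 1) (ha₂ : a₂ ≤ d - 1)
    (hb₃ : 1 ≤ b₃ ∧ b₃ ≤ d - 1) (hb₄ : 1 ≤ b₄ ∧ b₄ ≤ d - 1)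
    (v₁ v₂ v₃ v₄ : Multiset ℕ)
    (hv₁ : v₁ = ↑((List.range d).map (fun j => if j < a₁ then j * t + 1 else j * t + 2)))
    (hv₂ : v₂ = ↑((List.range d).map (fun j => if j < a₂ then j * t + 1 else j * t + 2)))
    (hv₃ : v₃ = ↑((List.range (d - 1)).map
        (fun j => if j < b₃ then j * t + 1 else j * t + 2)) + {(d - 1) * t + 3})
    (hv₄ : v₄ = ↑((List.range (d - 1)).map
        (fun j => if j < b₄ then j * t + 1 else j * t + 2)) + {(d - 1) * t + 3})
    (hdist : List.Pairwise (· ≠ ·) [v₁, v₂, v₃, v₄])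
    (e₁₂ : SortedPair v₁ v₂) (e₂₃ : SortedPair v₂ v₃)
    (e₃₄ : SortedPair v₃ v₄) (e₄₁ : SortedPair v₄ v₁) :
    SortedPair v₁ v₃ ∨ SortedPair v₂ v₄ := by
  have h1 : v₁ = No4CycleAux.vA t d a₁ := hv₁
  have h2 : v₂ = No4CycleAux.vA t d a₂ := hv₂
  have h3 : v₃ = No4CycleAux.vB t d b₃ := hv₃
  have h4 : v₄ = No4CycleAux.vB t d b₄ := hv₄
  subst h1 h2 h3 h4
  have h23 : b₃ ≤ a₂ := (No4CycleAux.sorted_iff t d ht hd a₂ b₃ ha₂ hb₃.2).mp e₂₃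
  have h41 : b₄ ≤ a₁ := (No4CycleAux.sorted_iff t d ht hd a₁ b₄ ha₁ hb₄.2).mp
    ((No4CycleAux.sortedPair_comm _ _).mp e₄₁)
  rcases le_total a₂ a₁ with h | h
  · exact Or.inl ((No4CycleAux.sorted_iff t d ht hd a₁ b₃ ha₁ hb₃.2).mpr (h23.trans h))
  · exact Or.inr ((No4CycleAux.sorted_iff t d ht hd a₂ b₄ ha₂ hb₄.2).mpr (h41.trans h))
end
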